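/- Let A be a finite-dimensional commutative associative (not necessarily unital) algebra over ℂ that is perfect, i.e., A equals the ℂ-linear span of the set {x·y : x, y ∈ A}. Then A is unital: there exists an element e ∈ A with e·x = x for all x ∈ A. -/

import Mathlib

open Submodule LinearMap Module

universe u

section Aux

variable {A : Type u} [AddCommGroup A] [Module ℂ A]

/-- Restriction of the multiplication to a submodule closed under multiplication. -/
noncomputable def mulRestrict (mul : A →ₗ[ℂ] A →ₗ[ℂ] A) (P : Submodule ℂ A)
    (hP : ∀ a ∈ P, ∀ b ∈ P, mul a b ∈ P) : ↥P →ₗ[ℂ] ↥P →ₗ[ℂ] ↥P :=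
  LinearMap.mk₂ ℂ (fun a b => ⟨mul a.1 b.1, hP _ a.2 _ b.2⟩)
    (fun a a' b => Subtype.ext (by simp))
    (fun c a b => Subtype.ext (by simp))
    (fun a b b' => Subtype.ext (by simp))
    (fun c a b => Subtype.ext (by simp))

lemma mulRestrict_coe (mul : A →ₗ[ℂ] A →ₗ[ℂ] A) (P : Submodule ℂ A)
    (hP : ∀ a ∈ P, ∀ b ∈ P, mul a b ∈ P) (a b : ↥P) :
    (mulRestrict mul P hP a b : A) = mul a.1 b.1 := rfl

/-- Transfer of perfectness to a closed submodule. -/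
lemma restricted_perfect (mul : A →ₗ[ℂ] A →ₗ[ℂ] A) (P : Submodule ℂ A)
    (hP : ∀ a ∈ P, ∀ b ∈ P, mul a b ∈ P)
    (hspan : P ≤ Submodule.span ℂ {u : A | ∃ a ∈ P, ∃ b ∈ P, u = mul a b}) :
    Submodule.span ℂ {u : ↥P | ∃ x y : ↥P, u = mulRestrict mul P hP x y} = ⊤ := by
  apply Submodule.map_injective_of_injective P.injective_subtype
  rw [Submodule.map_span, Submodule.map_top, Submodule.range_subtype]
  have himg : P.subtype '' {u : ↥P | ∃ x y : ↥P, u = mulRestrict mul P hP x y}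
      = {u : A | ∃ a ∈ P, ∃ b ∈ P, u = mul a b} := by
    ext u
    constructor
    · rintro ⟨w, ⟨x, y, hxy⟩, rfl⟩
      exact ⟨x.1, x.2, y.1, y.2, by rw [hxy]; rfl⟩
    · rintro ⟨a, ha, b, hb, rfl⟩
      exact ⟨⟨mul a b, hP a ha b hb⟩, ⟨⟨a, ha⟩, ⟨b, hb⟩, rfl⟩, rfl⟩
  rw [himg]
  refine le_antisymm (Submodule.span_le.mpr ?_) hspan
  rintro u ⟨a, ha, b, hb, rfl⟩
  exact hP a ha b hb

/-- The common kernel of the multiplications by a list of elements is nonzero,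
when all multiplications are nilpotent. -/
lemma common_ker [Nontrivial A] [FiniteDimensional ℂ A] (mul : A →ₗ[ℂ] A →ₗ[ℂ] A)
    (hcomm : ∀ x y : A, mul x y = mul y x)
    (hassoc : ∀ x y z : A, mul (mul x y) z = mul x (mul y z))
    (hnil : ∀ x : A, IsNilpotent (mul x : Module.End ℂ A)) (l : List A) :
    ∃ K : Submodule ℂ A, K ≠ ⊥ ∧ (∀ x ∈ l, ∀ v ∈ K, mul x v = 0) ∧
      (∀ (x : A), ∀ v ∈ K, mul x v ∈ K) := by
  induction l with
  | nil => exact ⟨⊤, top_ne_bot, by simp, fun x v _ => trivial⟩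
  | cons x l ih =>
    obtain ⟨K, hKbot, hKkill, hKinv⟩ := ih
    refine ⟨K ⊓ LinearMap.ker (mul x), ?_, ?_, ?_⟩
    · -- nonzero
      intro hbot
      obtain ⟨v, hvK, hv0⟩ := (Submodule.ne_bot_iff K).mp hKbot
      obtain ⟨m, hm⟩ := hnil x
      have key : ∀ (k : ℕ) (w : A), w ∈ K → ((mul x : Module.End ℂ A) ^ k) w = 0 → w = 0 := by
        intro k
        induction k with
        | zero => intro w _ hw; simpa using hw
        | succ k ihk =>
          intro w hwK hw
          have h1 : ((mul x : Module.End ℂ A) ^ k) (mul x w) = 0 := by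
            rw [pow_succ] at hw
            simpa [Module.End.mul_apply] using hw
          have h2 : mul x w = 0 := ihk (mul x w) (hKinv x w hwK) h1
          have : w ∈ K ⊓ LinearMap.ker (mul x) :=
            Submodule.mem_inf.mpr ⟨hwK, LinearMap.mem_ker.mpr h2⟩
          rw [hbot] at this
          simpa using this
      exact hv0 (key m v hvK (by rw [hm]; simp))
    · intro y hy v hv
      obtain ⟨hv1, hv2⟩ := Submodule.mem_inf.mp hv
      rcases List.mem_cons.mp hy with rfl | hy
      · exact LinearMap.mem_ker.mp hv2
      · exact hKkill y hy v hv1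
    · intro y v hv
      obtain ⟨hv1, hv2⟩ := Submodule.mem_inf.mp hv
      have h1 : mul x (mul y v) = 0 := by
        rw [← hassoc, hcomm x y, hassoc, LinearMap.mem_ker.mp hv2, map_zero]
      exact Submodule.mem_inf.mpr ⟨hKinv y v hv1, LinearMap.mem_ker.mpr h1⟩
  
end Aux

theorem aux_unital : ∀ (n : ℕ) {A : Type u} [AddCommGroup A] [Module ℂ A]
    [FiniteDimensional ℂ A] (mul : A →ₗ[ℂ] A →ₗ[ℂ] A),
    (∀ x y : A, mul x y = mul y x) →
    (∀ x y z : A, mul (mul x y) z = mul x (mul y z)) →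
    (Submodule.span ℂ {u : A | ∃ x y : A, u = mul x y} = ⊤) →
    Module.finrank ℂ A ≤ n →
    ∃ e : A, ∀ x : A, mul e x = x := by
  intro n
  induction n with
  | zero =>
    intro A _ _ _ mul hcomm hassoc hperf hrank
    rw [Nat.le_zero] at hrank
    have : Subsingleton A := Module.finrank_zero_iff.mp hrank
    exact ⟨0, fun x => Subsingleton.elim _ _⟩
  | succ n ih =>
    intro A _ _ _ mul hcomm hassoc hperf hrank
    by_cases hss : Subsingleton A
    · exact ⟨0, fun x => Subsingleton.elim _ _⟩
    have hnt : Nontrivial A := not_subsingleton_iff_nontrivial.mp hss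
    by_cases hAnn : LinearMap.ker mul = ⊥
    · -- faithful branch: find a non-nilpotent multiplication operator
      have hnonnil : ∃ x : A, ¬ IsNilpotent (mul x : Module.End ℂ A) := by
        by_contra hcon
        push_neg at hcon
        obtain ⟨s, hs⟩ : ∃ s : Finset A, Submodule.span ℂ (s : Set A) = ⊤ :=
          Module.finite_def.mp (inferInstance : Module.Finite ℂ A)
        obtain ⟨K, hKbot, hKkill, _⟩ := common_ker mul hcomm hassoc hcon s.toList
        obtain ⟨v, hvK, hv0⟩ := (Submodule.ne_bot_iff K).mp hKbot
        have hvAnn : v ∈ LinearMap.ker mul := by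
          rw [LinearMap.mem_ker]
          apply LinearMap.ext
          intro y
          rw [hcomm v y, LinearMap.zero_apply]
          have hy : y ∈ Submodule.span ℂ (s : Set A) := by rw [hs]; trivial
          induction hy using Submodule.span_induction with
          | mem z hz => exact hKkill z (by simpa using hz) v hvK
          | zero => simp
          | add a b _ _ ha hb => rw [map_add, LinearMap.add_apply, ha, hb, add_zero]
          | smul c a _ ha => rw [map_smul, LinearMap.smul_apply, ha, smul_zero]
        rw [hAnn, Submodule.mem_bot] at hvAnn
        exact hv0 hvAnn
      obtain ⟨x, hx⟩ := hnonnil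
      obtain ⟨N0, hN0⟩ := Filter.eventually_atTop.mp
        ((mul x : Module.End ℂ A).eventually_isCompl_ker_pow_range_pow)
      have hcompl : IsCompl (LinearMap.ker ((mul x : Module.End ℂ A) ^ (N0 + 1)))
          (LinearMap.range ((mul x : Module.End ℂ A) ^ (N0 + 1))) := hN0 (N0 + 1) (Nat.le_succ _)
      set N := N0 + 1 with hN
      set f : Module.End ℂ A := mul x with hf
      set K := LinearMap.ker (f ^ N) with hK
      set B := LinearMap.range (f ^ N) with hB
      have hpow : ∀ (m : ℕ) (u v : A), (f ^ m) (mul u v) = mul ((f ^ m) u) v := by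
        intro m
        induction m with
        | zero => intro u v; simp
        | succ m ihm =>
          intro u v
          rw [pow_succ', Module.End.mul_apply, Module.End.mul_apply, ihm]
          exact (hassoc x ((f ^ m) u) v).symm
      have hKideal : ∀ u ∈ K, ∀ v : A, mul u v ∈ K := by
        intro u hu v
        rw [LinearMap.mem_ker, hpow N u v, LinearMap.mem_ker.mp hu, map_zero, LinearMap.zero_apply]
      have hBideal : ∀ u ∈ B, ∀ v : A, mul u v ∈ B := by
        rintro u ⟨a, rfl⟩ v
        exact ⟨mul a v, hpow N a v⟩
      have hBne : B ≠ ⊥ := by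
        intro hb
        apply hx
        refine ⟨N, ?_⟩
        apply LinearMap.ext
        intro v
        have hv : (f ^ N) v ∈ B := ⟨v, rfl⟩
        rw [hb, Submodule.mem_bot] at hv
        rw [LinearMap.zero_apply]
        exact hv
      by_cases hKbot : K = ⊥
      · -- mul x is injective, hence surjective
        have hinj : Function.Injective f := by
          rw [← LinearMap.ker_eq_bot, eq_bot_iff]
          intro v hv
          have hv' : f v = 0 := LinearMap.mem_ker.mp hv
          have hvK : v ∈ K := by
            rw [LinearMap.mem_ker, hN, pow_succ, Module.End.mul_apply, hv', map_zero]
          rw [hKbot] at hvK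
          exact hvK
        have hsurj := LinearMap.injective_iff_surjective.mp hinj
        obtain ⟨e, he⟩ := hsurj x
        refine ⟨e, fun y => hinj ?_⟩
        show mul x (mul e y) = mul x y
        rw [← hassoc]
        have hxe : mul x e = x := he
        rw [hxe]
      · -- both Fitting pieces are proper; recurse into each
        have hdis : ∀ u, u ∈ K → u ∈ B → u = 0 :=
          fun u h1 h2 => Submodule.disjoint_def.mp hcompl.disjoint u h1 h2
        have hdecomp : ∀ v : A, ∃ k ∈ K, ∃ b ∈ B, v = k + b := by
          intro v
          have : v ∈ K ⊔ B := by
            rw [codisjoint_iff.mp hcompl.codisjoint]; trivial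
          obtain ⟨k, hk, b, hb, hkb⟩ := Submodule.mem_sup.mp this
          exact ⟨k, hk, b, hb, hkb.symm⟩
        set SK := Submodule.span ℂ {u : A | ∃ a ∈ K, ∃ b ∈ K, u = mul a b} with hSK
        set SB := Submodule.span ℂ {u : A | ∃ a ∈ B, ∃ b ∈ B, u = mul a b} with hSB
        have hSKle : SK ≤ K := by
          rw [hSK, Submodule.span_le]
          rintro u ⟨a, ha, b, hb, rfl⟩
          exact hKideal a ha b
        have hSBle : SB ≤ B := by
          rw [hSB, Submodule.span_le]
          rintro u ⟨a, ha, b, hb, rfl⟩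
          exact hBideal a ha b
        have hcross : ∀ a ∈ K, ∀ b ∈ B, mul a b = 0 := by
          intro a ha b hb
          refine hdis _ (hKideal a ha b) ?_
          rw [hcomm]
          exact hBideal b hb a
        have hprod : ∀ u v : A, mul u v ∈ SK ⊔ SB := by
          intro u v
          obtain ⟨uk, huk, ub, hub, rfl⟩ := hdecomp u
          obtain ⟨vk, hvk, vb, hvb, rfl⟩ := hdecomp v
          have expand : mul (uk + ub) (vk + vb) = mul uk vk + mul ub vb := by
            simp only [map_add, LinearMap.add_apply]
            rw [hcross uk huk vb hvb, hcomm ub vk, hcross vk hvk ub hub]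
            abel
          rw [expand]
          exact Submodule.add_mem _
            (Submodule.mem_sup_left (Submodule.subset_span ⟨uk, huk, vk, hvk, rfl⟩))
            (Submodule.mem_sup_right (Submodule.subset_span ⟨ub, hub, vb, hvb, rfl⟩))
        have htop : (⊤ : Submodule ℂ A) ≤ SK ⊔ SB := by
          rw [← hperf, Submodule.span_le]
          rintro w ⟨u, v, rfl⟩
          exact hprod u v
        have hKle : K ≤ SK := by
          intro v hv
          obtain ⟨sk, hsk, sb, hsb, hsum⟩ := Submodule.mem_sup.mp (htop trivial : v ∈ SK ⊔ SB)
          have hsb0 : sb = 0 := by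
            refine hdis sb ?_ (hSBle hsb)
            have : sb = v - sk := by rw [← hsum]; abel
            rw [this]
            exact Submodule.sub_mem _ hv (hSKle hsk)
          rw [← hsum, hsb0, add_zero]
          exact hsk
        have hBle : B ≤ SB := by
          intro v hv
          obtain ⟨sk, hsk, sb, hsb, hsum⟩ := Submodule.mem_sup.mp (htop trivial : v ∈ SK ⊔ SB)
          have hsk0 : sk = 0 := by
            refine hdis sk (hSKle hsk) ?_
            have : sk = v - sb := by rw [← hsum]; abel
            rw [this]
            exact Submodule.sub_mem _ hv (hSBle hsb)
          rw [← hsum, hsk0, zero_add]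
          exact hsb
        -- set up the two restricted algebras
        have hKcl : ∀ a ∈ K, ∀ b ∈ K, mul a b ∈ K := fun a ha b _ => hKideal a ha b
        have hBcl : ∀ a ∈ B, ∀ b ∈ B, mul a b ∈ B := fun a ha b _ => hBideal a ha b
        have hKne_top : K ≠ ⊤ := by
          intro h
          apply hBne
          have : Disjoint B (⊤ : Submodule ℂ A) := h ▸ hcompl.disjoint.symm
          exact disjoint_top.mp this
        have hBne_top : B ≠ ⊤ := by
          intro h
          apply hKbot
          have : Disjoint K (⊤ : Submodule ℂ A) := h ▸ hcompl.disjoint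
          exact disjoint_top.mp this
        have hrkK : Module.finrank ℂ ↥K ≤ n := by
          have := Submodule.finrank_lt (K := ℂ) (V := A) hKne_top
          omega
        have hrkB : Module.finrank ℂ ↥B ≤ n := by
          have := Submodule.finrank_lt (K := ℂ) (V := A) hBne_top
          omega
        obtain ⟨eK, heK⟩ := ih (mulRestrict mul K hKcl)
          (fun a b => Subtype.ext (hcomm a.1 b.1))
          (fun a b c => Subtype.ext (hassoc a.1 b.1 c.1))
          (restricted_perfect mul K hKcl hKle) hrkK
        obtain ⟨eB, heB⟩ := ih (mulRestrict mul B hBcl)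
          (fun a b => Subtype.ext (hcomm a.1 b.1))
          (fun a b c => Subtype.ext (hassoc a.1 b.1 c.1))
          (restricted_perfect mul B hBcl hBle) hrkB
        refine ⟨eK.1 + eB.1, fun y => ?_⟩
        obtain ⟨yk, hyk, yb, hyb, rfl⟩ := hdecomp y
        have h1 : mul eK.1 yk = yk := congrArg Subtype.val (heK ⟨yk, hyk⟩)
        have h2 : mul eB.1 yb = yb := congrArg Subtype.val (heB ⟨yb, hyb⟩)
        simp only [map_add, LinearMap.add_apply]
        rw [h1, h2, hcross eK.1 eK.2 yb hyb, hcomm eB.1 yk, hcross yk hyk eB.1 eB.2]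
        abel
    · -- annihilator branch: pass to the quotient
      set Ann := LinearMap.ker mul with hAnnDef
      have hAnn0 : ∀ a ∈ Ann, ∀ y : A, mul a y = 0 := by
        intro a ha y
        rw [LinearMap.mem_ker.mp ha, LinearMap.zero_apply]
      have h1 : Ann ≤ LinearMap.ker (mul.compr₂ Ann.mkQ) := by
        intro a ha
        rw [LinearMap.mem_ker]
        apply LinearMap.ext
        intro y
        rw [LinearMap.compr₂_apply, hAnn0 a ha y, map_zero, LinearMap.zero_apply]
      set m2 : (A ⧸ Ann) →ₗ[ℂ] A →ₗ[ℂ] (A ⧸ Ann) := Ann.liftQ (mul.compr₂ Ann.mkQ) h1 with hm2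
      have h2 : Ann ≤ LinearMap.ker m2.flip := by
        intro a ha
        rw [LinearMap.mem_ker]
        apply LinearMap.ext
        intro q
        obtain ⟨y, rfl⟩ := Ann.mkQ_surjective q
        simp only [LinearMap.flip_apply, LinearMap.zero_apply, hm2, Submodule.mkQ_apply,
          Submodule.liftQ_apply, LinearMap.compr₂_apply]
        rw [hcomm y a, hAnn0 a ha y]
        exact (Submodule.Quotient.mk_eq_zero _).mpr (Submodule.zero_mem _)
      set mulQ : (A ⧸ Ann) →ₗ[ℂ] (A ⧸ Ann) →ₗ[ℂ] (A ⧸ Ann) := (Ann.liftQ m2.flip h2).flip with hmq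
      have hkey : ∀ x y : A, mulQ (Ann.mkQ x) (Ann.mkQ y) = Ann.mkQ (mul x y) := by
        intro x y
        simp only [hmq, hm2, LinearMap.flip_apply, Submodule.mkQ_apply, Submodule.liftQ_apply,
          LinearMap.compr₂_apply]
      have hcommQ : ∀ p q : A ⧸ Ann, mulQ p q = mulQ q p := by
        intro p q
        obtain ⟨a, rfl⟩ := Ann.mkQ_surjective p
        obtain ⟨b, rfl⟩ := Ann.mkQ_surjective q
        rw [hkey, hkey, hcomm]
      have hassocQ : ∀ p q r : A ⧸ Ann, mulQ (mulQ p q) r = mulQ p (mulQ q r) := by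
        intro p q r
        obtain ⟨a, rfl⟩ := Ann.mkQ_surjective p
        obtain ⟨b, rfl⟩ := Ann.mkQ_surjective q
        obtain ⟨c, rfl⟩ := Ann.mkQ_surjective r
        rw [hkey, hkey, hkey, hkey, hassoc]
      have hperfQ : Submodule.span ℂ {u : A ⧸ Ann | ∃ p q : A ⧸ Ann, u = mulQ p q} = ⊤ := by
        refine le_antisymm le_top ?_
        have himg : Ann.mkQ '' {u : A | ∃ x y : A, u = mul x y}
            ⊆ {u : A ⧸ Ann | ∃ p q : A ⧸ Ann, u = mulQ p q} := by
          rintro w ⟨u, ⟨a, b, rfl⟩, rfl⟩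
          exact ⟨Ann.mkQ a, Ann.mkQ b, (hkey a b).symm⟩
        calc (⊤ : Submodule ℂ (A ⧸ Ann)) = Submodule.map Ann.mkQ ⊤ := by
              rw [Submodule.map_top, Submodule.range_mkQ]
          _ = Submodule.span ℂ (Ann.mkQ '' {u : A | ∃ x y : A, u = mul x y}) := by
              rw [← hperf, Submodule.map_span]
          _ ≤ _ := Submodule.span_mono himg
      have hrkQ : Module.finrank ℂ (A ⧸ Ann) ≤ n := by
        have hq := Submodule.finrank_quotient_add_finrank Ann
        have hpos : 0 < Module.finrank ℂ ↥Ann := by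
          rw [Module.finrank_pos_iff]
          exact Submodule.nontrivial_iff_ne_bot.mpr hAnn
        omega
      obtain ⟨ebar, hebar⟩ := ih mulQ hcommQ hassocQ hperfQ hrkQ
      obtain ⟨e, rfl⟩ := Ann.mkQ_surjective ebar
      have hEA : ∀ a : A, mul e a - a ∈ Ann := by
        intro a
        rw [← Submodule.ker_mkQ Ann, LinearMap.mem_ker, map_sub, ← hkey, hebar, sub_self]
      refine ⟨e, ?_⟩
      set g : A →ₗ[ℂ] A := mul e - LinearMap.id with hg
      have hker : Submodule.span ℂ {u : A | ∃ x y : A, u = mul x y}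
          ≤ LinearMap.ker g := by
        rw [Submodule.span_le]
        rintro w ⟨a, b, rfl⟩
        rw [SetLike.mem_coe, LinearMap.mem_ker, hg, LinearMap.sub_apply, LinearMap.id_apply,
          sub_eq_zero]
        have expand : mul e (mul a b) = mul (mul e a - a) b + mul a b := by
          rw [map_sub, LinearMap.sub_apply, ← hassoc]
          abel
        rw [expand, hAnn0 _ (hEA a) b, zero_add]
      intro y
      have hy : g y = 0 := LinearMap.mem_ker.mp ((hperf ▸ hker) trivial)
      rw [hg, LinearMap.sub_apply, LinearMap.id_apply, sub_eq_zero] at hy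
      exact hy

theorem perfect_comm_assoc_unital {A : Type*} [AddCommGroup A] [Module ℂ A]
    [FiniteDimensional ℂ A]
    (mul : A →ₗ[ℂ] A →ₗ[ℂ] A)
    (hcomm : ∀ x y : A, mul x y = mul y x)
    (hassoc : ∀ x y z : A, mul (mul x y) z = mul x (mul y z))
    (hperf : Submodule.span ℂ {u : A | ∃ x y : A, u = mul x y} = ⊤) :
    ∃ e : A, ∀ x : A, mul e x = x :=
  aux_unital (Module.finrank ℂ A) mul hcomm hassoc hperf le_rfl
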